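/- Suppose 𝒱 ⊆ {V_{a,b} : n ∈ ℕ, a, b ∈ ℝⁿ} has the linking property. Then the closed star-subalgebra A of B(H) generated by 𝒰 ∪ 𝒱 is prime: the intersection of any two nonzero closed two-sided ideals of A is nonzero. -/

import Mathlib

open scoped Classical

noncomputable section

/-- The set of real sequences. -/
abbrev X : Type := ℕ → ℝ

/-- The Hilbert space `ℓ²(X)`. -/
abbrev H : Type := lp (fun _ : X => ℂ) 2

/-- `Xa a` is the set of sequences extending the `n`-tuple `a`. -/
def Xa {n : ℕ} (a : Fin n → ℝ) : Set X := {x | ∀ i : Fin n, x i = a i}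

/-- Replace the initial segment of `x` by the tuple `a` (this is `f_{a,b}` for any `b`). -/
def repl {n : ℕ} (a : Fin n → ℝ) (x : X) : X := fun i => if h : i < n then a ⟨i, h⟩ else x i

/-- `P` is the family of orthogonal projections `P_a` onto `ℓ²(X_a)`. -/
def IsProjFamily (P : ∀ n : ℕ, (Fin n → ℝ) → (H →L[ℂ] H)) : Prop :=
  ∀ (n : ℕ) (a : Fin n → ℝ) (ξ : H) (x : X),
    P n a ξ x = if x ∈ Xa a then ξ x else 0

/-- `V` is the family of partial isometries `V_{a,b}`. -/
def IsVFamily (V : ∀ n : ℕ, (Fin n → ℝ) → (Fin n → ℝ) → (H →L[ℂ] H)) : Prop :=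
  ∀ (n : ℕ) (a b : Fin n → ℝ) (ξ : H) (x : X),
    V n a b ξ x = if x ∈ Xa b then ξ (repl a x) else 0

/-- `𝒱` has the linking property: any two tuples `α, β` have proper extensions `a, b` of a
common length `n > max m k` such that `V_{a,b} ∈ 𝒱`. -/
def LinkingProperty (V : ∀ n : ℕ, (Fin n → ℝ) → (Fin n → ℝ) → (H →L[ℂ] H))
    (𝒱 : Set (H →L[ℂ] H)) : Prop :=
  ∀ (m k : ℕ) (α : Fin m → ℝ) (β : Fin k → ℝ),
    ∃ (n : ℕ) (hn : max m k < n) (a b : Fin n → ℝ),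
      (∀ i : Fin m, a (Fin.castLE (by omega) i) = α i) ∧
      (∀ i : Fin k, b (Fin.castLE (by omega) i) = β i) ∧
      V n a b ∈ 𝒱

/-! ### Auxiliary material for the proof -/

open scoped ENNReal

local notation "⟪" x ", " y "⟫" => @inner ℂ _ _ x y

lemma mem_Xa {n : ℕ} {a : Fin n → ℝ} {x : X} : x ∈ Xa a ↔ ∀ i : Fin n, x i = a i := Iff.rfl

lemma repl_apply_lt {n : ℕ} (a : Fin n → ℝ) (x : X) {i : ℕ} (h : i < n) :
    repl a x i = a ⟨i, h⟩ := by simp [repl, h]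

lemma repl_apply_ge {n : ℕ} (a : Fin n → ℝ) (x : X) {i : ℕ} (h : ¬ i < n) :
    repl a x i = x i := by simp [repl, h]

lemma repl_mem {n : ℕ} (a : Fin n → ℝ) (x : X) : repl a x ∈ Xa a := by
  intro i; simp [repl, i.isLt]

lemma repl_eq_self {n : ℕ} {a : Fin n → ℝ} {x : X} (h : x ∈ Xa a) : repl a x = x := by
  funext i
  by_cases hi : i < n
  · rw [repl_apply_lt a x hi]; exact (h ⟨i, hi⟩).symm
  · exact repl_apply_ge a x hi

lemma repl_repl {n : ℕ} (a b : Fin n → ℝ) (x : X) : repl a (repl b x) = repl a x := by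
  funext i
  by_cases hi : i < n
  · rw [repl_apply_lt _ _ hi, repl_apply_lt _ _ hi]
  · rw [repl_apply_ge _ _ hi, repl_apply_ge _ _ hi, repl_apply_ge _ _ hi]

/-- The involution of `X` swapping `Xa a` and `Xa b`. -/
def flip2 {n : ℕ} (a b : Fin n → ℝ) (x : X) : X :=
  if x ∈ Xa b then repl a x else if x ∈ Xa a then repl b x else x

lemma Xa_eq_of_mem {n : ℕ} {a b : Fin n → ℝ} {x : X} (hx : x ∈ Xa a) (hx' : x ∈ Xa b) :
    a = b := by
  funext i; rw [← hx i, hx' i]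

lemma flip2_involutive {n : ℕ} (a b : Fin n → ℝ) : Function.Involutive (flip2 a b) := by
  intro x
  by_cases hb : x ∈ Xa b
  · simp only [flip2, if_pos hb]
    by_cases hab : repl a x ∈ Xa b
    · have : a = b := Xa_eq_of_mem (repl_mem a x) hab
      subst this
      simp only [if_pos hab, repl_repl]
      exact repl_eq_self hb
    · simp only [if_neg hab, if_pos (repl_mem a x), repl_repl]
      exact repl_eq_self hb
  · by_cases ha : x ∈ Xa a
    · have h1 : repl b x ∈ Xa b := repl_mem b x
      simp only [flip2, if_neg hb, if_pos ha, if_pos h1, repl_repl]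
      exact repl_eq_self ha
    · simp only [flip2, if_neg hb, if_neg ha]

/-- The key reindexing identity. -/
lemma tsum_flip {M : Type*} [AddCommMonoid M] [TopologicalSpace M] [T2Space M]
    {n : ℕ} (a b : Fin n → ℝ) (F : X → X → M) :
    (∑' x : X, if x ∈ Xa b then F (repl a x) x else 0)
      = ∑' x : X, if x ∈ Xa a then F x (repl b x) else 0 := by
  rw [← ((flip2_involutive a b).toPerm _).tsum_eq
    (fun x => if x ∈ Xa b then F (repl a x) x else 0)]
  refine tsum_congr fun x => ?_
  change (if flip2 a b x ∈ Xa b then F (repl a (flip2 a b x)) (flip2 a b x) else 0) = _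
  by_cases ha : x ∈ Xa a
  · rw [if_pos ha]
    by_cases hb : x ∈ Xa b
    · have hab : a = b := Xa_eq_of_mem ha hb
      subst hab
      simp only [flip2, if_pos hb]
      rw [if_pos (by rw [repl_eq_self hb]; exact hb)]
      rw [repl_eq_self hb, repl_eq_self hb]
    · have : flip2 a b x = repl b x := by simp [flip2, hb, ha]
      rw [this, if_pos (repl_mem b x), repl_repl, repl_eq_self ha]
  · rw [if_neg ha]
    by_cases hb : x ∈ Xa b
    · have : flip2 a b x = repl a x := by simp [flip2, hb]
      rw [this, if_neg]
      intro hmem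
      exact ha (by rw [← Xa_eq_of_mem (repl_mem a x) hmem] at hb; exact hb)
    · have : flip2 a b x = x := by simp [flip2, hb, ha]
      rw [this, if_neg hb]

/-- The standard basis vector of `H` at `x`. -/
def ee (x : X) : H := lp.single 2 x 1

lemma ee_apply (x y : X) : (ee x) y = if y = x then (1:ℂ) else 0 := by
  rw [ee, lp.single_apply]
  split_ifs with h
  · subst h; simp
  · simp [Pi.single_apply, h]

lemma norm_ee (x : X) : ‖ee x‖ = 1 := by
  have := lp.norm_single (p := 2) (E := fun _ : X => ℂ) (by norm_num) x (1:ℂ)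
  simpa [ee] using this

lemma inner_ee_left (x : X) (f : H) : ⟪ee x, f⟫ = f x := by
  rw [ee, lp.inner_single_left, RCLike.inner_apply]
  simp

/-- override the first `m` entries of `a` by `c`. -/
def ovr {n m : ℕ} (_h : m ≤ n) (a : Fin n → ℝ) (c : Fin m → ℝ) : Fin n → ℝ :=
  fun i => if h' : (i:ℕ) < m then c ⟨i, h'⟩ else a i

lemma ovr_eq_of_ext {n m : ℕ} (h : m ≤ n) {a : Fin n → ℝ} {c : Fin m → ℝ}
    (hext : ∀ i : Fin m, a (Fin.castLE h i) = c i) : ovr h a c = a := by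
  funext i
  by_cases him : (i:ℕ) < m
  · rw [ovr, dif_pos him, ← hext ⟨i, him⟩]
    rfl
  · rw [ovr, dif_neg him]

lemma ovr_full {n : ℕ} (h : n ≤ n) (a c : Fin n → ℝ) : ovr h a c = c := by
  funext i
  rw [ovr, dif_pos i.isLt]

/-- The set of all the partial isometries. -/
def WW (V : ∀ n : ℕ, (Fin n → ℝ) → (Fin n → ℝ) → (H →L[ℂ] H)) : Set (H →L[ℂ] H) :=
  {W | ∃ (n : ℕ) (a b : Fin n → ℝ), W = V n a b}

section VV
variable {V : ∀ n : ℕ, (Fin n → ℝ) → (Fin n → ℝ) → (H →L[ℂ] H)} (hV : IsVFamily V)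
include hV

lemma V_ee {n : ℕ} (a b : Fin n → ℝ) (x : X) :
    V n a b (ee x) = if x ∈ Xa a then ee (repl b x) else 0 := by
  apply lp.ext; funext y
  rw [hV]
  by_cases hx : x ∈ Xa a
  · rw [if_pos hx]
    by_cases hy : y ∈ Xa b
    · rw [if_pos hy, ee_apply, ee_apply]
      congr 1
      simp only [eq_iff_iff]
      constructor
      · rintro rfl
        rw [repl_repl b a y, repl_eq_self hy]
      · rintro rfl
        rw [repl_repl, repl_eq_self hx]
    · rw [if_neg hy, ee_apply, if_neg]
      rintro rfl
      exact hy (repl_mem b x)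
  · rw [if_neg hx]
    have h0 : ((0 : H) : ∀ _ : X, ℂ) y = 0 := rfl
    rw [h0]
    by_cases hy : y ∈ Xa b
    · rw [if_pos hy, ee_apply, if_neg]
      rintro h
      exact hx (h ▸ repl_mem a y)
    · rw [if_neg hy]

lemma V_star {n : ℕ} (a b : Fin n → ℝ) : star (V n a b) = V n b a := by
  rw [ContinuousLinearMap.star_eq_adjoint]
  refine ((ContinuousLinearMap.eq_adjoint_iff _ _).mpr fun ξ η => ?_).symm
  rw [lp.inner_eq_tsum, lp.inner_eq_tsum]
  simp only [RCLike.inner_apply]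
  have h1 : ∀ x : X, (starRingEnd ℂ) ((V n b a ξ) x) * η x
      = if x ∈ Xa a then (starRingEnd ℂ) (ξ (repl b x)) * η x else 0 := by
    intro x
    rw [hV]
    split_ifs <;> simp
  have h2 : ∀ x : X, (starRingEnd ℂ) (ξ x) * (V n a b η) x
      = if x ∈ Xa b then (starRingEnd ℂ) (ξ x) * η (repl a x) else 0 := by
    intro x
    rw [hV]
    split_ifs <;> simp
  rw [tsum_congr fun x => (mul_comm _ _).trans (h1 x),
    tsum_congr fun x => (mul_comm _ _).trans (h2 x)]
  exact tsum_flip b a (fun y x => (starRingEnd ℂ) (ξ y) * η x)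

lemma V_norm_le {n : ℕ} (a b : Fin n → ℝ) : ‖V n a b‖ ≤ 1 := by
  refine ContinuousLinearMap.opNorm_le_bound _ zero_le_one fun ξ => ?_
  rw [one_mul]
  have h2 : (0:ℝ) < (2:ℝ≥0∞).toReal := by norm_num
  have key : ‖V n a b ξ‖ ^ (2:ℝ≥0∞).toReal ≤ ‖ξ‖ ^ (2:ℝ≥0∞).toReal := by
    rw [lp.norm_rpow_eq_tsum h2, lp.norm_rpow_eq_tsum h2]
    have hterm : ∀ x : X, ‖(V n a b ξ) x‖ ^ (2:ℝ≥0∞).toReal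
        = if x ∈ Xa b then ‖ξ (repl a x)‖ ^ (2:ℝ≥0∞).toReal else 0 := by
      intro x
      rw [hV]
      split_ifs
      · rfl
      · simp [Real.zero_rpow h2.ne']
    rw [tsum_congr hterm, tsum_flip a b (fun y _ => ‖ξ y‖ ^ (2:ℝ≥0∞).toReal)]
    refine Summable.tsum_le_tsum (fun x => ?_) ?_ ((lp.memℓp ξ).summable h2)
    · split_ifs
      · exact le_refl _
      · positivity
    · refine Summable.of_nonneg_of_le (fun x => ?_) (fun x => ?_) ((lp.memℓp ξ).summable h2)
      · split_ifs
        · positivity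
        · exact le_refl _
      · split_ifs
        · exact le_refl _
        · positivity
  have h2' : (2:ℝ≥0∞).toReal = ((2:ℕ):ℝ) := by norm_num
  rw [h2', Real.rpow_natCast, Real.rpow_natCast] at key
  nlinarith [norm_nonneg (V n a b ξ), norm_nonneg ξ]

lemma V_mul_V_le {n m : ℕ} (h : m ≤ n) (a b : Fin n → ℝ) (c d : Fin m → ℝ) :
    V n a b * V m c d
      = if ∀ i : Fin m, a (Fin.castLE h i) = d i then V n (ovr h a c) b else 0 := by
  have f1 : ∀ x : X, (repl a x ∈ Xa d ↔ ∀ i : Fin m, a (Fin.castLE h i) = d i) := by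
    intro x
    constructor
    · intro hx i
      have := hx i
      rwa [repl_apply_lt a x (lt_of_lt_of_le i.isLt h)] at this
    · intro hc i
      rw [repl_apply_lt a x (lt_of_lt_of_le i.isLt h)]
      exact hc i
  have f2 : ∀ x : X, repl c (repl a x) = repl (ovr h a c) x := by
    intro x
    funext i
    by_cases him : i < m
    · rw [repl_apply_lt c _ him, repl_apply_lt (ovr h a c) x (lt_of_lt_of_le him h), ovr,
        dif_pos him]
    · by_cases hin : i < n
      · rw [repl_apply_ge c _ him, repl_apply_lt a x hin, repl_apply_lt (ovr h a c) x hin, ovr,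
          dif_neg him]
      · rw [repl_apply_ge c _ him, repl_apply_ge a x hin, repl_apply_ge (ovr h a c) x hin]
  by_cases hc : ∀ i : Fin m, a (Fin.castLE h i) = d i
  · rw [if_pos hc]
    refine ContinuousLinearMap.ext fun ξ => lp.ext (funext fun x => ?_)
    rw [ContinuousLinearMap.mul_apply, hV, hV, hV]
    by_cases hx : x ∈ Xa b
    · rw [if_pos hx, if_pos hx, if_pos ((f1 x).mpr hc), f2]
    · rw [if_neg hx, if_neg hx]
  · rw [if_neg hc]
    refine ContinuousLinearMap.ext fun ξ => lp.ext (funext fun x => ?_)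
    rw [ContinuousLinearMap.mul_apply, hV, hV]
    by_cases hx : x ∈ Xa b
    · rw [if_pos hx, if_neg (fun hh => hc ((f1 x).mp hh))]
      simp
    · rw [if_neg hx]
      simp

lemma V_mul_V_ge {n m : ℕ} (h : n ≤ m) (a b : Fin n → ℝ) (c d : Fin m → ℝ) :
    V n a b * V m c d
      = if ∀ i : Fin n, d (Fin.castLE h i) = a i then V m c (ovr h d b) else 0 := by
  have g1 : ∀ x : X, repl c (repl a x) = repl c x := by
    intro x
    funext i
    by_cases him : i < m
    · rw [repl_apply_lt c _ him, repl_apply_lt c x him]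
    · rw [repl_apply_ge c _ him, repl_apply_ge c x him,
        repl_apply_ge a x (fun hin => him (lt_of_lt_of_le hin h))]
  have fwd : ∀ x : X, x ∈ Xa b → repl a x ∈ Xa d →
      (∀ i : Fin n, d (Fin.castLE h i) = a i) ∧ x ∈ Xa (ovr h d b) := by
    intro x hb hd
    constructor
    · intro i
      have := hd (Fin.castLE h i)
      rw [show ((Fin.castLE h i : Fin m) : ℕ) = (i : ℕ) from rfl,
        repl_apply_lt a x i.isLt] at this
      exact this.symm
    · intro i
      by_cases hin : (i:ℕ) < n
      · rw [ovr, dif_pos hin]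
        exact hb ⟨i, hin⟩
      · rw [ovr, dif_neg hin]
        have := hd i
        rwa [repl_apply_ge a x hin] at this
  have bwd : ∀ x : X, (∀ i : Fin n, d (Fin.castLE h i) = a i) → x ∈ Xa (ovr h d b) →
      x ∈ Xa b ∧ repl a x ∈ Xa d := by
    intro x hc ho
    constructor
    · intro i
      have := ho (Fin.castLE h i)
      simp only [ovr] at this
      rw [dif_pos (show ((Fin.castLE h i : Fin m) : ℕ) < n from i.isLt)] at this
      exact this
    · intro i
      by_cases hin : (i:ℕ) < n
      · rw [repl_apply_lt a x hin]
        exact (hc ⟨i, hin⟩).symm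
      · rw [repl_apply_ge a x hin]
        have := ho i
        rwa [ovr, dif_neg hin] at this
  by_cases hc : ∀ i : Fin n, d (Fin.castLE h i) = a i
  · rw [if_pos hc]
    refine ContinuousLinearMap.ext fun ξ => lp.ext (funext fun x => ?_)
    rw [ContinuousLinearMap.mul_apply, hV, hV, hV]
    by_cases ho : x ∈ Xa (ovr h d b)
    · obtain ⟨hb, hd⟩ := bwd x hc ho
      rw [if_pos hb, if_pos hd, if_pos ho, g1]
    · rw [if_neg ho]
      by_cases hb : x ∈ Xa b
      · rw [if_pos hb, if_neg (fun hd => ho (fwd x hb hd).2)]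
      · rw [if_neg hb]
  · rw [if_neg hc]
    refine ContinuousLinearMap.ext fun ξ => lp.ext (funext fun x => ?_)
    rw [ContinuousLinearMap.mul_apply, hV, hV]
    by_cases hb : x ∈ Xa b
    · rw [if_pos hb, if_neg (fun hd => hc (fwd x hb hd).1)]
      simp
    · rw [if_neg hb]
      simp

lemma V_mul_V_cases (n m : ℕ) (a b : Fin n → ℝ) (c d : Fin m → ℝ) :
    V n a b * V m c d = 0 ∨ ∃ (k : ℕ) (e f : Fin k → ℝ), V n a b * V m c d = V k e f := by
  rcases le_total m n with h | h
  · rw [V_mul_V_le hV h]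
    split_ifs
    · exact Or.inr ⟨n, ovr h a c, b, rfl⟩
    · exact Or.inl rfl
  · rw [V_mul_V_ge hV h]
    split_ifs
    · exact Or.inr ⟨m, c, ovr h d b, rfl⟩
    · exact Or.inl rfl

lemma P_mul_P_of_ext {n N : ℕ} (h : n ≤ N) (a : Fin n → ℝ) (A : Fin N → ℝ)
    (hext : ∀ i : Fin n, A (Fin.castLE h i) = a i) :
    V N A A * V n a a = V N A A ∧ V n a a * V N A A = V N A A := by
  constructor
  · rw [V_mul_V_le hV h, if_pos hext, ovr_eq_of_ext h hext]
  · rw [V_mul_V_ge hV h, if_pos hext, ovr_eq_of_ext h hext]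

lemma V_sandwich {n : ℕ} (a b : Fin n → ℝ) :
    V n b b * V n a b * V n a a = V n a b := by
  have h1 : V n a b * V n a a = V n a b := by
    rw [V_mul_V_le hV le_rfl,
      if_pos (show ∀ i : Fin n, a (Fin.castLE le_rfl i) = a i from fun i => rfl), ovr_full]
  have h2 : V n b b * V n a b = V n a b := by
    rw [V_mul_V_le hV le_rfl,
      if_pos (show ∀ i : Fin n, b (Fin.castLE le_rfl i) = b i from fun i => rfl), ovr_full]
  rw [mul_assoc, h1, h2]

lemma corner {m N : ℕ} (h : m ≤ N) (c d : Fin m → ℝ) (x : X) (A : Fin N → ℝ)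
    (hx : ∀ i : Fin N, x i = A i) :
    V N A A * V m c d * V N A A = ⟪ee x, V m c d (ee x)⟫ • V N A A := by
  have hxA : x ∈ Xa A := mem_Xa.mpr hx
  by_cases hd : ∀ i : Fin m, A (Fin.castLE h i) = d i
  · have hxd : x ∈ Xa d := mem_Xa.mpr fun i => by
      rw [show d i = A (Fin.castLE h i) from (hd i).symm]
      exact hx (Fin.castLE h i)
    rw [V_mul_V_le hV h, if_pos hd]
    by_cases hc : x ∈ Xa c
    · have hcond : ∀ i : Fin N, (ovr h A c) (Fin.castLE (le_refl N) i) = A i := by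
        intro i
        by_cases him : (i:ℕ) < m
        · rw [show (ovr h A c) (Fin.castLE (le_refl N) i) = c ⟨i, him⟩ by
            rw [ovr]; exact dif_pos him]
          rw [show c ⟨(i:ℕ), him⟩ = x (i:ℕ) from (hc ⟨i, him⟩).symm, hx i]
        · rw [show (ovr h A c) (Fin.castLE (le_refl N) i) = A i by rw [ovr]; exact dif_neg him]
      rw [V_mul_V_le hV (le_refl N), if_pos hcond, ovr_full]
      have hscal : ⟪ee x, V m c d (ee x)⟫ = 1 := by
        rw [V_ee hV, if_pos hc, inner_ee_left, repl_eq_self hxd, ee_apply, if_pos rfl]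
      rw [hscal, one_smul]
    · have hcond : ¬ ∀ i : Fin N, (ovr h A c) (Fin.castLE (le_refl N) i) = A i := by
        intro hcond
        apply hc
        refine mem_Xa.mpr fun i => ?_
        have := hcond (Fin.castLE h i)
        rw [show (ovr h A c) (Fin.castLE (le_refl N) (Fin.castLE h i)) = c ⟨(i:ℕ), i.isLt⟩ by
          rw [ovr]; exact dif_pos i.isLt] at this
        rw [show c i = c ⟨(i:ℕ), i.isLt⟩ from rfl, this]
        exact hx (Fin.castLE h i)
      rw [V_mul_V_le hV (le_refl N), if_neg hcond]
      have hscal : ⟪ee x, V m c d (ee x)⟫ = 0 := by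
        rw [V_ee hV, if_neg hc, inner_zero_right]
      rw [hscal, zero_smul]
  · have hscal : ⟪ee x, V m c d (ee x)⟫ = 0 := by
      by_cases hc : x ∈ Xa c
      · rw [V_ee hV, if_pos hc, inner_ee_left, ee_apply, if_neg]
        intro hxe
        apply hd
        intro i
        have hxdmem : x ∈ Xa d := by
          rw [hxe]
          exact repl_mem d x
        rw [← hx (Fin.castLE h i)]
        exact hxdmem i
      · rw [V_ee hV, if_neg hc, inner_zero_right]
    rw [V_mul_V_le hV h, if_neg hd, hscal, zero_smul, zero_mul]

lemma mul_mem_spanW {T S : H →L[ℂ] H} (hT : T ∈ Submodule.span ℂ (WW V))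
    (hS : S ∈ Submodule.span ℂ (WW V)) : T * S ∈ Submodule.span ℂ (WW V) := by
  induction hT using Submodule.span_induction with
  | mem W hW =>
    induction hS using Submodule.span_induction with
    | mem W' hW' =>
      obtain ⟨n, a, b, rfl⟩ := hW
      obtain ⟨m, c, d, rfl⟩ := hW'
      rcases V_mul_V_cases hV n m a b c d with h | ⟨k, e, f, h⟩
      · rw [h]; exact Submodule.zero_mem _
      · rw [h]; exact Submodule.subset_span ⟨k, e, f, rfl⟩
    | zero => rw [mul_zero]; exact Submodule.zero_mem _
    | add x y hx hy ihx ihy => rw [mul_add]; exact Submodule.add_mem _ ihx ihy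
    | smul c x hx ihx => rw [mul_smul_comm]; exact Submodule.smul_mem _ _ ihx
  | zero => rw [zero_mul]; exact Submodule.zero_mem _
  | add x y hx hy ihx ihy => rw [add_mul]; exact Submodule.add_mem _ ihx ihy
  | smul c x hx ihx => rw [smul_mul_assoc]; exact Submodule.smul_mem _ _ ihx

lemma star_mem_spanW {T : H →L[ℂ] H} (hT : T ∈ Submodule.span ℂ (WW V)) :
    star T ∈ Submodule.span ℂ (WW V) := by
  induction hT using Submodule.span_induction with
  | mem W hW =>
    obtain ⟨n, a, b, rfl⟩ := hW
    rw [V_star hV]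
    exact Submodule.subset_span ⟨n, b, a, rfl⟩
  | zero => rw [star_zero]; exact Submodule.zero_mem _
  | add x y hx hy ihx ihy => rw [star_add]; exact Submodule.add_mem _ ihx ihy
  | smul c x hx ihx =>
    rw [star_smul]
    exact Submodule.smul_mem _ _ ihx

lemma P_eq_V {P : ∀ n : ℕ, (Fin n → ℝ) → (H →L[ℂ] H)} (hP : IsProjFamily P)
    (n : ℕ) (a : Fin n → ℝ) : P n a = V n a a := by
  refine ContinuousLinearMap.ext fun ξ => lp.ext (funext fun x => ?_)
  rw [hP, hV]
  by_cases hx : x ∈ Xa a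
  · rw [if_pos hx, if_pos hx, repl_eq_self hx]
  · rw [if_neg hx, if_neg hx]

lemma adjoin_subset_span {P : ∀ n : ℕ, (Fin n → ℝ) → (H →L[ℂ] H)} (hP : IsProjFamily P)
    {𝒱 : Set (H →L[ℂ] H)} (h𝒱 : 𝒱 ⊆ WW V) {T : H →L[ℂ] H}
    (hT : T ∈ NonUnitalStarAlgebra.adjoin ℂ
      ({W | ∃ (n : ℕ) (a : Fin n → ℝ), W = P n a} ∪ 𝒱)) :
    T ∈ Submodule.span ℂ (WW V) := by
  induction hT using NonUnitalStarAlgebra.adjoin_induction with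
  | mem W hW =>
    rcases hW with ⟨n, a, rfl⟩ | hW
    · exact Submodule.subset_span ⟨n, a, a, P_eq_V hV hP n a⟩
    · exact Submodule.subset_span (h𝒱 hW)
  | add x y hx hy ihx ihy => exact Submodule.add_mem _ ihx ihy
  | zero => exact Submodule.zero_mem _
  | mul x y hx hy ihx ihy => exact mul_mem_spanW hV ihx ihy
  | smul c x hx ihx => exact Submodule.smul_mem _ _ ihx
  | star x hx ihx => exact star_mem_spanW hV ihx

omit hV

lemma eq_zero_of_ee {T : H →L[ℂ] H} (h : ∀ x : X, T (ee x) = 0) : T = 0 := by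
  refine ContinuousLinearMap.ext fun ξ => ?_
  rw [ContinuousLinearMap.zero_apply]
  have hs : HasSum (fun x : X => lp.single 2 x (ξ x)) ξ :=
    lp.hasSum_single (by simp) ξ
  have hTs : HasSum (fun x : X => T (lp.single 2 x (ξ x))) (T ξ) := hs.mapL T
  have hz : ∀ x : X, T (lp.single 2 x (ξ x)) = 0 := by
    intro x
    have h1 : lp.single 2 x (ξ x) = ξ x • ee x := by
      rw [ee, ← lp.single_smul, smul_eq_mul, mul_one]
    rw [h1, map_smul, h, smul_zero]
  have : HasSum (fun _ : X => (0 : H)) (T ξ) := by simpa [hz] using hTs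
  exact this.unique hasSum_zero

include hV

lemma span_corner {T₀ : H →L[ℂ] H} (hT₀ : T₀ ∈ Submodule.span ℂ (WW V)) (x : X) :
    ∃ N₀ : ℕ, ∀ N, N₀ ≤ N →
      V N (fun i : Fin N => x i) (fun i : Fin N => x i) * T₀
          * V N (fun i : Fin N => x i) (fun i : Fin N => x i)
        = ⟪ee x, T₀ (ee x)⟫ • V N (fun i : Fin N => x i) (fun i : Fin N => x i) := by
  obtain ⟨k, f, g, hsum⟩ := Submodule.mem_span_set'.mp hT₀
  choose n a b hW using fun i => (g i).2
  refine ⟨Finset.univ.sup n, fun N hN => ?_⟩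
  set A := fun i : Fin N => x i with hA
  have hcorner : ∀ i : Fin k,
      V N A A * (g i : H →L[ℂ] H) * V N A A = ⟪ee x, (g i : H →L[ℂ] H) (ee x)⟫ • V N A A := by
    intro i
    rw [hW i]
    exact corner hV (le_trans (Finset.le_sup (Finset.mem_univ i)) hN) _ _ x A fun j => rfl
  have LHS : V N A A * T₀ * V N A A
      = ∑ i, (f i * ⟪ee x, (g i : H →L[ℂ] H) (ee x)⟫) • V N A A := by
    rw [← hsum, Finset.mul_sum, Finset.sum_mul]
    refine Finset.sum_congr rfl fun i _ => ?_
    rw [mul_smul_comm, smul_mul_assoc, hcorner i, smul_smul]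
  have RHS : ⟪ee x, T₀ (ee x)⟫ = ∑ i, f i * ⟪ee x, (g i : H →L[ℂ] H) (ee x)⟫ := by
    rw [← hsum, ContinuousLinearMap.sum_apply, inner_sum]
    refine Finset.sum_congr rfl fun i _ => ?_
    rw [ContinuousLinearMap.smul_apply, inner_smul_right]
  rw [LHS, RHS, Finset.sum_smul]

lemma corner_approx {N n' : ℕ} (hle : N ≤ n') (x : X) (a' : Fin n' → ℝ)
    (hext : ∀ i : Fin N, a' (Fin.castLE hle i) = x i) (T' T₀ : H →L[ℂ] H)
    (hcor : V N (fun i : Fin N => x i) (fun i : Fin N => x i) * T₀ *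
        V N (fun i : Fin N => x i) (fun i : Fin N => x i)
      = ⟪ee x, T₀ (ee x)⟫ • V N (fun i : Fin N => x i) (fun i : Fin N => x i)) :
    ‖V n' a' a' * T' * V n' a' a' - ⟪ee x, T₀ (ee x)⟫ • V n' a' a'‖ ≤ ‖T' - T₀‖ := by
  set PN := V N (fun i : Fin N => x i) (fun i : Fin N => x i) with hPN
  set Pa := V n' a' a' with hPa
  obtain ⟨hPaPN, hPNPa⟩ := P_mul_P_of_ext hV hle (fun i : Fin N => x i) a' hext
  have hPaPa : Pa * Pa = Pa :=
    (P_mul_P_of_ext hV le_rfl a' a' (fun i => rfl)).1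
  have key : Pa * T' * Pa - ⟪ee x, T₀ (ee x)⟫ • Pa = Pa * (PN * (T' - T₀) * PN) * Pa := by
    have hmid : PN * (T' - T₀) * PN = PN * T' * PN - ⟪ee x, T₀ (ee x)⟫ • PN := by
      rw [mul_sub, sub_mul, hcor]
    rw [hmid, mul_sub, sub_mul]
    congr 1
    · rw [← mul_assoc Pa (PN * T') PN, ← mul_assoc Pa PN T', hPaPN,
        mul_assoc (Pa * T') PN Pa, hPNPa]
    · rw [mul_smul_comm, smul_mul_assoc, hPaPN, hPaPa]
  rw [key]
  have hPa1 : ‖Pa‖ ≤ 1 := V_norm_le hV a' a'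
  have hPN1 : ‖PN‖ ≤ 1 := V_norm_le hV _ _
  have hconj : ∀ (Q D : H →L[ℂ] H), ‖Q‖ ≤ 1 → ‖Q * D * Q‖ ≤ ‖D‖ := by
    intro Q D hQ
    have h1 := norm_mul_le (Q * D) Q
    have h2 := norm_mul_le Q D
    have h3 := norm_nonneg D
    have h4 := norm_nonneg Q
    have h5 := norm_nonneg (Q * D)
    nlinarith
  calc ‖Pa * (PN * (T' - T₀) * PN) * Pa‖ ≤ ‖PN * (T' - T₀) * PN‖ := hconj _ _ hPa1
    _ ≤ ‖T' - T₀‖ := hconj _ _ hPN1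

end VV

lemma final_estimate (Pa Pb Vab Dt Ds wv : H →L[ℂ] H) (lam mu : ℂ) (dT dS : ℝ)
    (hdT0 : 0 < dT) (hdS0 : 0 < dS)
    (hwval : wv = (lam * mu) • Vab
      + (mu • (Pb * (Vab * Dt)) + ((Ds * (Vab * (lam • Pa))) + Ds * (Vab * Dt))))
    (hPa1 : ‖Pa‖ ≤ 1) (hPb1 : ‖Pb‖ ≤ 1) (hVab1 : ‖Vab‖ ≤ 1)
    (hDt : ‖Dt‖ ≤ dT / 8) (hDs : ‖Ds‖ ≤ dS / 8)
    (hlam : ‖lam - (dT : ℂ)‖ ≤ dT / 8) (hmu : ‖mu - (dS : ℂ)‖ ≤ dS / 8)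
    (z z' : X) (hVabz : Vab (ee z) = ee z') : wv ≠ 0 := by
  have hmain : ‖(lam * mu) • Vab (ee z)‖ = ‖lam‖ * ‖mu‖ := by
    rw [norm_smul, hVabz, norm_ee, norm_mul, mul_one]
  have hmul3 : ∀ Q R D : H →L[ℂ] H, ‖Q‖ ≤ 1 → ‖R‖ ≤ 1 → ‖Q * (R * D)‖ ≤ ‖D‖ := by
    intro Q R D hQ hR
    calc ‖Q * (R * D)‖ ≤ ‖Q‖ * ‖R * D‖ := norm_mul_le _ _
      _ ≤ 1 * ‖R * D‖ := mul_le_mul_of_nonneg_right hQ (norm_nonneg _)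
      _ = ‖R * D‖ := one_mul _
      _ ≤ ‖R‖ * ‖D‖ := norm_mul_le _ _
      _ ≤ 1 * ‖D‖ := mul_le_mul_of_nonneg_right hR (norm_nonneg _)
      _ = ‖D‖ := one_mul _
  have he1 : ‖mu • (Pb * (Vab * Dt))‖ ≤ ‖mu‖ * ‖Dt‖ := by
    calc ‖mu • (Pb * (Vab * Dt))‖ ≤ ‖mu‖ * ‖Pb * (Vab * Dt)‖ := ContinuousLinearMap.opNorm_smul_le _ _
      _ ≤ ‖mu‖ * ‖Dt‖ := mul_le_mul_of_nonneg_left (hmul3 _ _ _ hPb1 hVab1) (norm_nonneg mu)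
  have he2 : ‖Ds * (Vab * (lam • Pa))‖ ≤ ‖Ds‖ * ‖lam‖ := by
    have hin : ‖Vab * (lam • Pa)‖ ≤ ‖lam‖ := by
      rw [mul_smul_comm]
      calc ‖lam • (Vab * Pa)‖ ≤ ‖lam‖ * ‖Vab * Pa‖ := ContinuousLinearMap.opNorm_smul_le _ _
        _ ≤ ‖lam‖ * (‖Vab‖ * ‖Pa‖) :=
            mul_le_mul_of_nonneg_left (norm_mul_le _ _) (norm_nonneg _)
        _ ≤ ‖lam‖ * (1 * 1) := by gcongr
        _ = ‖lam‖ := by ring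
    calc ‖Ds * (Vab * (lam • Pa))‖ ≤ ‖Ds‖ * ‖Vab * (lam • Pa)‖ := norm_mul_le _ _
      _ ≤ ‖Ds‖ * ‖lam‖ := mul_le_mul_of_nonneg_left hin (norm_nonneg Ds)
  have he3 : ‖Ds * (Vab * Dt)‖ ≤ ‖Ds‖ * ‖Dt‖ := by
    have hin : ‖Vab * Dt‖ ≤ ‖Dt‖ := by
      calc ‖Vab * Dt‖ ≤ ‖Vab‖ * ‖Dt‖ := norm_mul_le _ _
        _ ≤ 1 * ‖Dt‖ := mul_le_mul_of_nonneg_right hVab1 (norm_nonneg _)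
        _ = ‖Dt‖ := one_mul _
    calc ‖Ds * (Vab * Dt)‖ ≤ ‖Ds‖ * ‖Vab * Dt‖ := norm_mul_le _ _
      _ ≤ ‖Ds‖ * ‖Dt‖ := mul_le_mul_of_nonneg_left hin (norm_nonneg Ds)
  set Err : H →L[ℂ] H := mu • (Pb * (Vab * Dt))
    + ((Ds * (Vab * (lam • Pa))) + Ds * (Vab * Dt)) with hErrdef
  have hErr : ‖Err‖ ≤ ‖mu‖ * ‖Dt‖ + (‖Ds‖ * ‖lam‖ + ‖Ds‖ * ‖Dt‖) := by
    rw [hErrdef]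
    calc ‖mu • (Pb * (Vab * Dt)) + ((Ds * (Vab * (lam • Pa))) + Ds * (Vab * Dt))‖
        ≤ ‖mu • (Pb * (Vab * Dt))‖ + ‖(Ds * (Vab * (lam • Pa))) + Ds * (Vab * Dt)‖ :=
          norm_add_le _ _
      _ ≤ ‖mu • (Pb * (Vab * Dt))‖
          + (‖Ds * (Vab * (lam • Pa))‖ + ‖Ds * (Vab * Dt)‖) := by
            gcongr
            exact norm_add_le _ _
      _ ≤ ‖mu‖ * ‖Dt‖ + (‖Ds‖ * ‖lam‖ + ‖Ds‖ * ‖Dt‖) := by gcongr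
  have hlamlb : dT - dT / 8 ≤ ‖lam‖ := by
    have h1' := abs_norm_sub_norm_le lam ((dT : ℝ) : ℂ)
    have h2' : ‖((dT : ℝ) : ℂ)‖ = dT := by
      rw [Complex.norm_real, Real.norm_eq_abs, abs_of_pos hdT0]
    rw [h2'] at h1'
    have := abs_le.mp h1'
    linarith [hlam]
  have hlamub : ‖lam‖ ≤ dT + dT / 8 := by
    have h1' := abs_norm_sub_norm_le lam ((dT : ℝ) : ℂ)
    have h2' : ‖((dT : ℝ) : ℂ)‖ = dT := by
      rw [Complex.norm_real, Real.norm_eq_abs, abs_of_pos hdT0]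
    rw [h2'] at h1'
    have := abs_le.mp h1'
    linarith [hlam]
  have hmulb : dS - dS / 8 ≤ ‖mu‖ := by
    have h1' := abs_norm_sub_norm_le mu ((dS : ℝ) : ℂ)
    have h2' : ‖((dS : ℝ) : ℂ)‖ = dS := by
      rw [Complex.norm_real, Real.norm_eq_abs, abs_of_pos hdS0]
    rw [h2'] at h1'
    have := abs_le.mp h1'
    linarith [hmu]
  have hmuub : ‖mu‖ ≤ dS + dS / 8 := by
    have h1' := abs_norm_sub_norm_le mu ((dS : ℝ) : ℂ)
    have h2' : ‖((dS : ℝ) : ℂ)‖ = dS := by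
      rw [Complex.norm_real, Real.norm_eq_abs, abs_of_pos hdS0]
    rw [h2'] at h1'
    have := abs_le.mp h1'
    linarith [hmu]
  have heval : wv (ee z) = (lam * mu) • Vab (ee z) + Err (ee z) := by
    rw [hwval, ContinuousLinearMap.add_apply, ContinuousLinearMap.smul_apply]
  have hlow : ‖lam‖ * ‖mu‖ - ‖Err‖ ≤ ‖wv (ee z)‖ := by
    have hkey : wv (ee z) + -(Err (ee z)) = (lam * mu) • Vab (ee z) := by
      rw [heval]
      exact add_neg_cancel_right _ _
    have hb1 : ‖(lam * mu) • Vab (ee z)‖ ≤ ‖wv (ee z)‖ + ‖Err (ee z)‖ := by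
      have hn := norm_add_le (wv (ee z)) (-(Err (ee z)))
      rwa [hkey, norm_neg] at hn
    have hb2 : ‖Err (ee z)‖ ≤ ‖Err‖ := by
      have hle := ContinuousLinearMap.le_opNorm Err (ee z)
      rwa [norm_ee, mul_one] at hle
    rw [hmain] at hb1
    linarith
  have hpos : 0 < ‖wv (ee z)‖ := by
    have p1 : ‖mu‖ * ‖Dt‖ ≤ (dS + dS / 8) * (dT / 8) :=
      mul_le_mul hmuub hDt (norm_nonneg _) (by linarith)
    have p2 : ‖Ds‖ * ‖lam‖ ≤ dS / 8 * (dT + dT / 8) :=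
      mul_le_mul hDs hlamub (norm_nonneg _) (by linarith)
    have p3 : ‖Ds‖ * ‖Dt‖ ≤ dS / 8 * (dT / 8) :=
      mul_le_mul hDs hDt (norm_nonneg _) (by linarith)
    have p4 : (dT - dT / 8) * (dS - dS / 8) ≤ ‖lam‖ * ‖mu‖ :=
      mul_le_mul hlamlb hmulb (by linarith) (le_trans (by linarith) hlamlb)
    have q2 : 0 < dT * dS := mul_pos hdT0 hdS0
    linarith [p1, p2, p3, p4, hlow, hErr, q2]
  intro h0
  rw [h0] at hpos
  simp at hpos

set_option maxHeartbeats 2000000 in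
/-- if `𝒱 ⊆ {V_{a,b}}` has the linking property, then the closed star-subalgebra
`A` of `B(H)` generated by `𝒰 ∪ 𝒱` is prime: the intersection of any two nonzero closed
two-sided ideals of `A` is nonzero. -/
theorem stmt2 (P : ∀ n : ℕ, (Fin n → ℝ) → (H →L[ℂ] H)) (hP : IsProjFamily P)
    (V : ∀ n : ℕ, (Fin n → ℝ) → (Fin n → ℝ) → (H →L[ℂ] H)) (hV : IsVFamily V)
    (𝒱 : Set (H →L[ℂ] H)) (h𝒱 : 𝒱 ⊆ {W | ∃ (n : ℕ) (a b : Fin n → ℝ), W = V n a b})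
    (hlink : LinkingProperty V 𝒱)
    (A : NonUnitalStarSubalgebra ℂ (H →L[ℂ] H))
    (hA : A = (NonUnitalStarAlgebra.adjoin ℂ
      ({W | ∃ (n : ℕ) (a : Fin n → ℝ), W = P n a} ∪ 𝒱)).topologicalClosure) :
    ∀ I J : TwoSidedIdeal A, IsClosed (I : Set A) → IsClosed (J : Set A) →
      I ≠ ⊥ → J ≠ ⊥ → I ⊓ J ≠ ⊥ := by
  intro I J _ _ hI hJ hbot
  -- nonzero elements of the ideals
  have exNon : ∀ K : TwoSidedIdeal A, K ≠ ⊥ → ∃ t : A, t ∈ K ∧ (t : H →L[ℂ] H) ≠ 0 := by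
    intro K hK
    by_contra hc
    push_neg at hc
    refine hK (SetLike.ext fun z => ⟨fun hz => ?_, fun hz => ?_⟩)
    · rw [TwoSidedIdeal.mem_bot]
      exact Subtype.ext (hc z hz)
    · rw [TwoSidedIdeal.mem_bot] at hz
      rw [hz]
      exact zero_mem K
  obtain ⟨t, htI, ht0⟩ := exNon I hI
  obtain ⟨s, hsJ, hs0⟩ := exNon J hJ
  have h𝒱W : 𝒱 ⊆ WW V := h𝒱
  -- every element of A is in the closure of the span of the V's
  have hAmem : ∀ u : A, (u : H →L[ℂ] H)
      ∈ closure ((Submodule.span ℂ (WW V) : Submodule ℂ (H →L[ℂ] H)) : Set (H →L[ℂ] H)) := by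
    rintro ⟨uv, hu⟩
    rw [hA] at hu
    exact closure_mono (fun W hW => adjoin_subset_span hV hP h𝒱W hW) hu
  -- nonvanishing diagonal entries
  obtain ⟨x, hx⟩ : ∃ x : X, (t : H →L[ℂ] H) (ee x) ≠ 0 := by
    by_contra hc; push_neg at hc; exact ht0 (eq_zero_of_ee hc)
  obtain ⟨y, hy⟩ : ∃ y : X, (s : H →L[ℂ] H) (ee y) ≠ 0 := by
    by_contra hc; push_neg at hc; exact hs0 (eq_zero_of_ee hc)
  set T : H →L[ℂ] H := (t : H →L[ℂ] H) with hTdef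
  set S : H →L[ℂ] H := (s : H →L[ℂ] H) with hSdef
  set T' : H →L[ℂ] H := star T * T with hT'def
  set S' : H →L[ℂ] H := star S * S with hS'def
  set dT : ℝ := ‖T (ee x)‖ ^ 2 with hdTdef
  set dS : ℝ := ‖S (ee y)‖ ^ 2 with hdSdef
  have hdT0 : 0 < dT := by
    rw [hdTdef]
    exact pow_pos (norm_pos_iff.mpr hx) 2
  have hdS0 : 0 < dS := by
    rw [hdSdef]
    exact pow_pos (norm_pos_iff.mpr hy) 2
  have hdiagT : ⟪ee x, T' (ee x)⟫ = (dT : ℂ) := by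
    rw [hT'def, ContinuousLinearMap.mul_apply, ContinuousLinearMap.star_eq_adjoint,
      ContinuousLinearMap.adjoint_inner_right, inner_self_eq_norm_sq_to_K, hdTdef]
    norm_cast
  have hdiagS : ⟪ee y, S' (ee y)⟫ = (dS : ℂ) := by
    rw [hS'def, ContinuousLinearMap.mul_apply, ContinuousLinearMap.star_eq_adjoint,
      ContinuousLinearMap.adjoint_inner_right, inner_self_eq_norm_sq_to_K, hdSdef]
    norm_cast
  -- approximants in the span
  obtain ⟨T₀, hT₀span, hT₀close⟩ :
      ∃ T₀ ∈ (Submodule.span ℂ (WW V) : Submodule ℂ (H →L[ℂ] H)), ‖T' - T₀‖ < dT / 8 := by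
    have hval : ((star t * t : A) : H →L[ℂ] H) = T' := by
      rw [hT'def, hTdef, NonUnitalStarSubalgebra.coe_mul, StarMemClass.coe_star]
    have hmem := hAmem (star t * t)
    rw [hval, Metric.mem_closure_iff] at hmem
    obtain ⟨T₀, hT₀, hd⟩ := hmem (dT / 8) (by positivity)
    exact ⟨T₀, hT₀, by rwa [dist_eq_norm] at hd⟩
  obtain ⟨S₀, hS₀span, hS₀close⟩ :
      ∃ S₀ ∈ (Submodule.span ℂ (WW V) : Submodule ℂ (H →L[ℂ] H)), ‖S' - S₀‖ < dS / 8 := by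
    have hval : ((star s * s : A) : H →L[ℂ] H) = S' := by
      rw [hS'def, hSdef, NonUnitalStarSubalgebra.coe_mul, StarMemClass.coe_star]
    have hmem := hAmem (star s * s)
    rw [hval, Metric.mem_closure_iff] at hmem
    obtain ⟨S₀, hS₀, hd⟩ := hmem (dS / 8) (by positivity)
    exact ⟨S₀, hS₀, by rwa [dist_eq_norm] at hd⟩
  -- scalar diagonal entries of the approximants
  have hlam : ‖⟪ee x, T₀ (ee x)⟫ - (dT : ℂ)‖ ≤ dT / 8 := by
    have heq : ⟪ee x, T₀ (ee x)⟫ - (dT : ℂ) = ⟪ee x, (T₀ - T') (ee x)⟫ := by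
      rw [ContinuousLinearMap.sub_apply, inner_sub_right, hdiagT]
    rw [heq]
    calc ‖⟪ee x, (T₀ - T') (ee x)⟫‖ ≤ ‖ee x‖ * ‖(T₀ - T') (ee x)‖ := norm_inner_le_norm _ _
      _ ≤ ‖ee x‖ * (‖T₀ - T'‖ * ‖ee x‖) := by
          gcongr
          exact ContinuousLinearMap.le_opNorm _ _
      _ = ‖T₀ - T'‖ := by rw [norm_ee]; ring
      _ = ‖T' - T₀‖ := norm_sub_rev _ _
      _ ≤ dT / 8 := hT₀close.le
  have hmu : ‖⟪ee y, S₀ (ee y)⟫ - (dS : ℂ)‖ ≤ dS / 8 := by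
    have heq : ⟪ee y, S₀ (ee y)⟫ - (dS : ℂ) = ⟪ee y, (S₀ - S') (ee y)⟫ := by
      rw [ContinuousLinearMap.sub_apply, inner_sub_right, hdiagS]
    rw [heq]
    calc ‖⟪ee y, (S₀ - S') (ee y)⟫‖ ≤ ‖ee y‖ * ‖(S₀ - S') (ee y)‖ := norm_inner_le_norm _ _
      _ ≤ ‖ee y‖ * (‖S₀ - S'‖ * ‖ee y‖) := by
          gcongr
          exact ContinuousLinearMap.le_opNorm _ _
      _ = ‖S₀ - S'‖ := by rw [norm_ee]; ring
      _ = ‖S' - S₀‖ := norm_sub_rev _ _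
      _ ≤ dS / 8 := hS₀close.le
  set lam : ℂ := ⟪ee x, T₀ (ee x)⟫ with hlamdef
  set mu : ℂ := ⟪ee y, S₀ (ee y)⟫ with hmudef
  clear_value lam mu
  -- corners
  obtain ⟨NT, hNT⟩ := span_corner hV hT₀span x
  obtain ⟨NS, hNS⟩ := span_corner hV hS₀span y
  -- linking
  obtain ⟨n', hn', a', b', ha', hb', hVmem⟩ :=
    hlink NT NS (fun i : Fin NT => x i) (fun i : Fin NS => y i)
  have hNTn' : NT ≤ n' := le_of_lt (lt_of_le_of_lt (le_max_left _ _) hn')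
  have hNSn' : NS ≤ n' := le_of_lt (lt_of_le_of_lt (le_max_right _ _) hn')
  set Pa : H →L[ℂ] H := V n' a' a' with hPadef
  set Pb : H →L[ℂ] H := V n' b' b' with hPbdef
  set Vab : H →L[ℂ] H := V n' a' b' with hVabdef
  -- memberships in A
  have hPmemA : ∀ (k : ℕ) (c : Fin k → ℝ), V k c c ∈ A := by
    intro k c
    rw [← P_eq_V hV hP k c, hA]
    exact NonUnitalStarSubalgebra.le_topologicalClosure _
      (NonUnitalStarAlgebra.subset_adjoin ℂ _ (Or.inl ⟨k, c, rfl⟩))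
  have hVmemA : Vab ∈ A := by
    rw [hVabdef, hA]
    exact NonUnitalStarSubalgebra.le_topologicalClosure _
      (NonUnitalStarAlgebra.subset_adjoin ℂ _ (Or.inr hVmem))
  set paA : A := ⟨Pa, hPmemA n' a'⟩ with hpaAdef
  set pbA : A := ⟨Pb, hPmemA n' b'⟩ with hpbAdef
  set vA : A := ⟨Vab, hVmemA⟩ with hvAdef
  set ta : A := paA * (star t * t) * paA with htadef
  set sb : A := pbA * (star s * s) * pbA with hsbdef
  set w : A := sb * (vA * ta) with hwdef
  -- coercion values
  have htaval : (ta : H →L[ℂ] H) = Pa * T' * Pa := by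
    rw [htadef, hT'def, hTdef]
    simp only [NonUnitalStarSubalgebra.coe_mul, StarMemClass.coe_star]
    rfl
  have hsbval : (sb : H →L[ℂ] H) = Pb * S' * Pb := by
    rw [hsbdef, hS'def, hSdef]
    simp only [NonUnitalStarSubalgebra.coe_mul, StarMemClass.coe_star]
    rfl
  have h3w : (w : H →L[ℂ] H) = (sb : H →L[ℂ] H) * (Vab * (ta : H →L[ℂ] H)) := by
    rw [hwdef]
    simp only [NonUnitalStarSubalgebra.coe_mul]
    rfl
  -- ideal memberships
  have ht'I : star t * t ∈ I := TwoSidedIdeal.mul_mem_left _ _ _ htI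
  have htaI : ta ∈ I := by
    rw [htadef]
    exact TwoSidedIdeal.mul_mem_right _ _ _ (TwoSidedIdeal.mul_mem_left _ _ _ ht'I)
  have hwI : w ∈ I := by
    rw [hwdef]
    exact TwoSidedIdeal.mul_mem_left _ _ _ (TwoSidedIdeal.mul_mem_left _ _ _ htaI)
  have hs'J : star s * s ∈ J := TwoSidedIdeal.mul_mem_left _ _ _ hsJ
  have hsbJ : sb ∈ J := by
    rw [hsbdef]
    exact TwoSidedIdeal.mul_mem_right _ _ _ (TwoSidedIdeal.mul_mem_left _ _ _ hs'J)
  have hwJ : w ∈ J := by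
    rw [hwdef]
    exact TwoSidedIdeal.mul_mem_right _ _ _ hsbJ
  clear_value paA pbA vA ta sb w
  -- the corner estimates
  have hextT : ∀ i : Fin NT, a' (Fin.castLE hNTn' i) = x i := fun i => ha' i
  have hextS : ∀ i : Fin NS, b' (Fin.castLE hNSn' i) = y i := fun i => hb' i
  set Dt : H →L[ℂ] H := (ta : H →L[ℂ] H) - lam • Pa with hDtdef
  set Ds : H →L[ℂ] H := (sb : H →L[ℂ] H) - mu • Pb with hDsdef
  have hDt : ‖Dt‖ ≤ dT / 8 := by
    have hca := corner_approx hV hNTn' x a' hextT T' T₀ (hNT NT le_rfl)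
    rw [hDtdef, htaval, hlamdef, hPadef]
    exact le_trans hca hT₀close.le
  have hDs : ‖Ds‖ ≤ dS / 8 := by
    have hca := corner_approx hV hNSn' y b' hextS S' S₀ (hNS NS le_rfl)
    rw [hDsdef, hsbval, hmudef, hPbdef]
    exact le_trans hca hS₀close.le
  have h1 : (ta : H →L[ℂ] H) = lam • Pa + Dt := by rw [hDtdef]; abel
  have h2 : (sb : H →L[ℂ] H) = mu • Pb + Ds := by rw [hDsdef]; abel
  clear_value Dt Ds
  clear htaval hsbval htadef hsbdef hwdef hT'def hS'def hTdef hSdef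
  -- expand w
  have hsand : Pb * (Vab * Pa) = Vab := by
    rw [hPadef, hPbdef, hVabdef, ← mul_assoc]
    exact V_sandwich hV a' b'
  have hwval : (w : H →L[ℂ] H)
      = (lam * mu) • Vab + (mu • (Pb * (Vab * Dt))
        + ((Ds * (Vab * (lam • Pa))) + Ds * (Vab * Dt))) := by
    rw [h3w, h1, h2]
    simp only [mul_add, add_mul, smul_mul_assoc, mul_smul_comm, smul_smul, smul_add, hsand]
    abel
  clear h1 h2 h3w
  -- evaluate at a vector supported in Xa a'
  set z : X := repl a' (fun _ => 0) with hzdef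
  have hzmem : z ∈ Xa a' := by rw [hzdef]; exact repl_mem a' _
  have hVabz : Vab (ee z) = ee (repl b' z) := by
    rw [hVabdef, V_ee hV, if_pos hzmem]
  have hPa1 : ‖Pa‖ ≤ 1 := by rw [hPadef]; exact V_norm_le hV a' a'
  have hPb1 : ‖Pb‖ ≤ 1 := by rw [hPbdef]; exact V_norm_le hV b' b'
  have hVab1 : ‖Vab‖ ≤ 1 := by rw [hVabdef]; exact V_norm_le hV a' b'
  have hwv0 : (w : H →L[ℂ] H) ≠ 0 :=
    final_estimate Pa Pb Vab Dt Ds _ lam mu dT dS hdT0 hdS0 hwval hPa1 hPb1 hVab1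
      hDt hDs hlam hmu z (repl b' z) hVabz
  -- conclusion
  have hw0 : w ≠ 0 := by
    intro h0
    exact hwv0 (by rw [h0]; rfl)
  have hwmem : w ∈ I ⊓ J := ⟨hwI, hwJ⟩
  rw [hbot, TwoSidedIdeal.mem_bot] at hwmem
  exact hw0 hwmem

end
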